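/- Let μ be the probability measure on (0,1) with density ψ̂(x) = (1/(2π))√((1-x)/x)·h(x), h a polynomial positive on [0,∞), and let V be a polynomial such that (d/dx)[2∫log|x−y|dμ(y) − V(x)] = −Re((x−1)₊^{1/2} x₊^{-1/2} h(x)) for x > 0. Then the function x ↦ 2∫log|x−y|dμ(y) − V(x) is constant on [0,1] and strictly decreasing on (1,∞); in particular there is ℓ ∈ ℝ with 2∫log|x−y|dμ(y) − V(x) − ℓ = 0 on [0,1] and < 0 on (1,∞). -/

import Mathlib

open MeasureTheory Real Set Filter Topology


lemma aux_nrpow_nonpos {x : ℝ} (hx : x ≤ 0) : x ^ (-(1/2) : ℝ) = 0 := by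
  rcases lt_or_eq_of_le hx with hx' | hx'
  · rw [Real.rpow_def_of_neg hx']
    have : Real.cos (-(1/2) * Real.pi) = 0 := by
      rw [show (-(1/2) : ℝ) * Real.pi = -(Real.pi/2) by ring, Real.cos_neg, Real.cos_pi_div_two]
    rw [this, mul_zero]
  · subst hx'; rw [Real.zero_rpow (by norm_num)]

lemma aux_nrpow_pos {x : ℝ} (hx : 0 < x) : x ^ (-(1/2) : ℝ) = (Real.sqrt x)⁻¹ := by
  rw [Real.rpow_neg hx.le, Real.sqrt_eq_rpow]

lemma aux_nrpow_nonneg (x : ℝ) : 0 ≤ x ^ (-(1/2) : ℝ) := by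
  rcases le_or_gt x 0 with hx | hx
  · rw [aux_nrpow_nonpos hx]
  · rw [aux_nrpow_pos hx]; positivity

lemma aux_sqrt_sub {a b : ℝ} (hb : 0 ≤ b) (hab : b ≤ a) :
    Real.sqrt a - Real.sqrt b ≤ Real.sqrt (a - b) := by
  have h : Real.sqrt a ≤ Real.sqrt (a - b) + Real.sqrt b := by
    rw [← Real.sqrt_sq (by positivity : (0:ℝ) ≤ Real.sqrt (a-b) + Real.sqrt b)]
    apply Real.sqrt_le_sqrt
    have h1 : Real.sqrt (a-b) ^ 2 = a - b := Real.sq_sqrt (by linarith)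
    have h2 : Real.sqrt b ^ 2 = b := Real.sq_sqrt hb
    nlinarith [Real.sqrt_nonneg (a-b), Real.sqrt_nonneg b]
  linarith

lemma aux_log_ratio {a b : ℝ} (hb : 0 < b) (hab : b ≤ a) :
    Real.log a - Real.log b ≤ 2 * Real.sqrt (a - b) / Real.sqrt b := by
  have ha : 0 < a := lt_of_lt_of_le hb hab
  have h1 : Real.log a - Real.log b = 2 * Real.log (Real.sqrt (a/b)) := by
    rw [Real.log_sqrt (by positivity), ← Real.log_div ha.ne' hb.ne']; ring
  have h2 : Real.log (Real.sqrt (a/b)) ≤ Real.sqrt (a/b) - 1 :=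
    Real.log_le_sub_one_of_pos (Real.sqrt_pos.mpr (by positivity))
  have h3 : Real.sqrt (a/b) = Real.sqrt a / Real.sqrt b := Real.sqrt_div ha.le b
  have hsb : 0 < Real.sqrt b := Real.sqrt_pos.mpr hb
  have h4 : Real.sqrt a - Real.sqrt b ≤ Real.sqrt (a - b) := aux_sqrt_sub hb.le hab
  rw [h1, h3]
  rw [h3] at h2
  calc 2 * Real.log (Real.sqrt a / Real.sqrt b) ≤ 2 * (Real.sqrt a / Real.sqrt b - 1) := by linarith
    _ = 2 * (Real.sqrt a - Real.sqrt b) / Real.sqrt b := by field_simp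
    _ ≤ 2 * Real.sqrt (a - b) / Real.sqrt b := by gcongr

lemma aux_abs_log {u : ℝ} (hu : 0 < u) :
    |Real.log u| ≤ 2 * (Real.sqrt u)⁻¹ + 2 * Real.sqrt u := by
  have hsu : 0 < Real.sqrt u := Real.sqrt_pos.mpr hu
  rcases le_or_gt 1 u with h1 | h1
  · rw [abs_of_nonneg (Real.log_nonneg h1)]
    have h0 := aux_log_ratio one_pos h1
    simp only [Real.log_one, sub_zero, Real.sqrt_one, div_one] at h0
    have h2 : Real.sqrt (u - 1) ≤ Real.sqrt u := Real.sqrt_le_sqrt (by linarith)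
    nlinarith [inv_nonneg.mpr hsu.le]
  · rw [abs_of_nonpos (Real.log_nonpos hu.le h1.le)]
    have h0 := aux_log_ratio hu h1.le
    simp only [Real.log_one, zero_sub] at h0
    have h2 : Real.sqrt (1 - u) ≤ 1 :=
      le_trans (Real.sqrt_le_sqrt (by linarith)) (le_of_eq Real.sqrt_one)
    calc -Real.log u ≤ 2 * Real.sqrt (1 - u) / Real.sqrt u := by linarith
      _ ≤ 2 * (Real.sqrt u)⁻¹ := by rw [div_eq_mul_inv]; nlinarith [inv_nonneg.mpr hsu.le]
      _ ≤ _ := by nlinarith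


lemma aux_split {s t : ℝ} (hs : 0 ≤ s) (ht : 0 < t) (hts : t ≠ s) :
    Real.log |s^2 - t^2| = Real.log |s - t| + Real.log (s + t) := by
  have h1 : |s^2 - t^2| = |s - t| * (s + t) := by
    have h2 : |s + t| = s + t := abs_of_pos (by linarith)
    rw [show s^2 - t^2 = (s-t)*(s+t) by ring, abs_mul, h2]
  rw [h1, Real.log_mul (by simp [sub_eq_zero]; exact fun h => hts h.symm) (by positivity)]

lemma aux_key {s t : ℝ} (hs : s ∈ Ioo (0:ℝ) 1) (ht : t ∈ Ioo (0:ℝ) 1) (hts : t ≠ s) :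
    |Real.log |s^2 - t^2| - Real.log (t^2)| ≤
      2*Real.sqrt s * (s-t) ^ (-(1/2):ℝ) + 2*Real.sqrt s * (t-s) ^ (-(1/2):ℝ)
        + (4*Real.sqrt s + 2 * |Real.log s| * Real.sqrt s) * t ^ (-(1/2):ℝ) := by
  obtain ⟨hs0, hs1⟩ := hs
  obtain ⟨ht0, ht1⟩ := ht
  have hsq : 0 < Real.sqrt s := Real.sqrt_pos.mpr hs0
  have htq : 0 < Real.sqrt t := Real.sqrt_pos.mpr ht0
  have htr : t ^ (-(1/2):ℝ) = (Real.sqrt t)⁻¹ := aux_nrpow_pos ht0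
  have hlt2 : Real.log (t^2) = 2 * Real.log t := by
    rw [sq, Real.log_mul ht0.ne' ht0.ne']; ring
  have hsplit := aux_split hs0.le ht0 hts
  -- B part
  have hB : |Real.log (s + t) - Real.log t| ≤ 2 * Real.sqrt s * (Real.sqrt t)⁻¹ := by
    rw [abs_of_nonneg (by
      have := Real.log_le_log ht0 (by linarith : t ≤ s + t); linarith)]
    have := aux_log_ratio ht0 (by linarith : t ≤ s + t)
    have he : s + t - t = s := by ring
    rw [he] at this
    calc Real.log (s+t) - Real.log t ≤ 2 * Real.sqrt s / Real.sqrt t := this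
      _ = 2 * Real.sqrt s * (Real.sqrt t)⁻¹ := by rw [div_eq_mul_inv]
  have hdec : Real.log |s^2 - t^2| - Real.log (t^2)
      = (Real.log |s - t| - Real.log t) + (Real.log (s+t) - Real.log t) := by
    rw [hsplit, hlt2]; ring
  rcases lt_or_gt_of_ne hts with hlt | hgt
  · -- t < s
    have habs : |s - t| = s - t := abs_of_pos (by linarith)
    have hst0 : 0 < s - t := by linarith
    have hA : |Real.log |s - t| - Real.log t|
        ≤ 2*Real.sqrt s * (Real.sqrt (s-t))⁻¹ + (2*Real.sqrt s + 2 * |Real.log s| * Real.sqrt s) * (Real.sqrt t)⁻¹ := by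
      rw [habs]
      have h5 : -Real.log (s-t) ≤ 2 * Real.sqrt t / Real.sqrt (s-t) + |Real.log s| := by
        have := aux_log_ratio hst0 (by linarith : s - t ≤ s)
        have he : s - (s - t) = t := by ring
        rw [he] at this
        have : Real.log s - Real.log (s-t) ≤ 2 * Real.sqrt t / Real.sqrt (s-t) := this
        have habs2 : -Real.log s ≤ |Real.log s| := neg_le_abs _
        linarith
      have h6 : -Real.log t ≤ 2 * Real.sqrt (s-t) / Real.sqrt t + |Real.log s| := by
        have := aux_log_ratio ht0 hlt.le
        have habs2 : -Real.log s ≤ |Real.log s| := neg_le_abs _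
        linarith
      have h7 : |Real.log (s-t) - Real.log t| ≤ -Real.log (s-t) + -Real.log t := by
        have l1 : Real.log (s-t) ≤ 0 := Real.log_nonpos hst0.le (by linarith)
        have l2 : Real.log t ≤ 0 := Real.log_nonpos ht0.le ht1.le
        rw [abs_sub_le_iff]; constructor <;> linarith [abs_nonneg (Real.log (s-t)), abs_nonneg (Real.log t)]
      have hmono1 : Real.sqrt t ≤ Real.sqrt s := Real.sqrt_le_sqrt hlt.le
      have hmono2 : Real.sqrt (s-t) ≤ Real.sqrt s := Real.sqrt_le_sqrt (by linarith)
      have hsst : 0 < Real.sqrt (s-t) := Real.sqrt_pos.mpr hst0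
      have hone : 1 ≤ Real.sqrt s * (Real.sqrt t)⁻¹ := by
        rw [← div_eq_mul_inv, le_div_iff₀ htq]; linarith
      have e5 : 2 * Real.sqrt t / Real.sqrt (s-t) ≤ 2 * Real.sqrt s * (Real.sqrt (s-t))⁻¹ := by
        rw [div_eq_mul_inv]; gcongr
      have e6 : 2 * Real.sqrt (s-t) / Real.sqrt t ≤ 2 * Real.sqrt s * (Real.sqrt t)⁻¹ := by
        rw [div_eq_mul_inv]; gcongr
      have e7 : 2 * |Real.log s| ≤ 2 * |Real.log s| * (Real.sqrt s * (Real.sqrt t)⁻¹) := by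
        nlinarith [abs_nonneg (Real.log s)]
      calc |Real.log (s-t) - Real.log t| ≤ -Real.log (s-t) + -Real.log t := h7
        _ ≤ 2 * Real.sqrt s * (Real.sqrt (s-t))⁻¹ + 2 * Real.sqrt s * (Real.sqrt t)⁻¹ + 2*|Real.log s| := by linarith
        _ ≤ _ := by nlinarith [abs_nonneg (Real.log s)]
    have hr1 : (s - t) ^ (-(1/2):ℝ) = (Real.sqrt (s-t))⁻¹ := aux_nrpow_pos hst0
    have hr2 : 0 ≤ (t - s) ^ (-(1/2):ℝ) := aux_nrpow_nonneg _
    calc |Real.log |s^2 - t^2| - Real.log (t^2)|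
        ≤ |Real.log |s - t| - Real.log t| + |Real.log (s+t) - Real.log t| := by
          rw [hdec]; exact abs_add_le _ _
      _ ≤ (2*Real.sqrt s * (Real.sqrt (s-t))⁻¹ + (2*Real.sqrt s + 2 * |Real.log s| * Real.sqrt s) * (Real.sqrt t)⁻¹)
          + 2 * Real.sqrt s * (Real.sqrt t)⁻¹ := by linarith
      _ ≤ _ := by
          rw [hr1, htr]
          nlinarith [inv_nonneg.mpr (Real.sqrt_nonneg t), abs_nonneg (Real.log s), Real.sqrt_nonneg s]
  · -- s < t
    have habs : |s - t| = t - s := by rw [abs_sub_comm]; exact abs_of_pos (by linarith)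
    have hts0 : 0 < t - s := by linarith
    have hA : |Real.log |s - t| - Real.log t| ≤ 2*Real.sqrt s * (Real.sqrt (t-s))⁻¹ := by
      rw [habs]
      have h5 := aux_log_ratio hts0 (by linarith : t - s ≤ t)
      have he : t - (t - s) = s := by ring
      rw [he] at h5
      rw [abs_sub_comm, abs_of_nonneg (by
        have := Real.log_le_log hts0 (by linarith : t - s ≤ t); linarith)]
      rw [div_eq_mul_inv] at h5; linarith
    have hr1 : (t - s) ^ (-(1/2):ℝ) = (Real.sqrt (t-s))⁻¹ := aux_nrpow_pos hts0
    have hr2 : 0 ≤ (s - t) ^ (-(1/2):ℝ) := aux_nrpow_nonneg _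
    calc |Real.log |s^2 - t^2| - Real.log (t^2)|
        ≤ |Real.log |s - t| - Real.log t| + |Real.log (s+t) - Real.log t| := by
          rw [hdec]; exact abs_add_le _ _
      _ ≤ 2*Real.sqrt s * (Real.sqrt (t-s))⁻¹ + 2 * Real.sqrt s * (Real.sqrt t)⁻¹ := by linarith
      _ ≤ _ := by
          rw [hr1, htr]
          have k1 : 0 ≤ (2*Real.sqrt s + 2 * |Real.log s| * Real.sqrt s) * (Real.sqrt t)⁻¹ := by positivity
          have k2 : 0 ≤ 2*Real.sqrt s * (s - t) ^ (-(1/2):ℝ) :=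
            mul_nonneg (by positivity) (aux_nrpow_nonneg _)
          nlinarith [k1, k2]


lemma aux_ii_sub_left (s : ℝ) :
    IntegrableOn (fun t => (s - t) ^ (-(1/2):ℝ)) (Ioo (0:ℝ) 1) volume :=
  ((((intervalIntegral.intervalIntegrable_rpow' (by norm_num : (-1:ℝ) < -(1/2)) (a := s) (b := s - 1)).comp_sub_left
    s).mono_set (by rw [show s - s = 0 by ring, show s - (s-1) = 1 by ring] : Set.uIcc 0 1 ⊆ Set.uIcc (s - s) (s - (s-1)))).1).mono_set
    Ioo_subset_Ioc_self

lemma aux_ii_sub_right (s : ℝ) :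
    IntegrableOn (fun t => (t - s) ^ (-(1/2):ℝ)) (Ioo (0:ℝ) 1) volume :=
  ((((intervalIntegral.intervalIntegrable_rpow' (by norm_num : (-1:ℝ) < -(1/2)) (a := -s) (b := 1 - s)).comp_sub_right
    s).mono_set (by rw [show -s + s = 0 by ring, show 1 - s + s = 1 by ring] : Set.uIcc 0 1 ⊆ Set.uIcc (-s + s) (1 - s + s))).1).mono_set
    Ioo_subset_Ioc_self

lemma aux_ii_self :
    IntegrableOn (fun t => t ^ (-(1/2):ℝ)) (Ioo (0:ℝ) 1) volume :=
  ((intervalIntegral.intervalIntegrable_rpow' (by norm_num : (-1:ℝ) < -(1/2)) (a := 0) (b := 1)).1).mono_set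
    Ioo_subset_Ioc_self

lemma aux_prpow_sqrt (x : ℝ) : x ^ ((1/2:ℝ)) = Real.sqrt x := (Real.sqrt_eq_rpow x).symm

lemma aux_I1 {s : ℝ} (hs0 : 0 < s) (hs1 : s < 1) :
    ∫ t in Ioo (0:ℝ) 1, (s - t) ^ (-(1/2):ℝ) = 2 * Real.sqrt s := by
  rw [← integral_Ioc_eq_integral_Ioo, ← intervalIntegral.integral_of_le zero_le_one]
  rw [intervalIntegral.integral_comp_sub_left (fun u => u ^ (-(1/2):ℝ)) s]
  rw [integral_rpow (Or.inl (by norm_num))]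
  have h1 : (s - 1 : ℝ) ^ (-(1/2) + 1 : ℝ) = 0 := by
    rw [show (-(1/2) + 1 : ℝ) = 1/2 by norm_num, aux_prpow_sqrt]
    exact Real.sqrt_eq_zero'.mpr (by linarith)
  rw [h1, show (-(1/2) + 1 : ℝ) = 1/2 by norm_num, aux_prpow_sqrt]
  ring

lemma aux_I2 {s : ℝ} (hs0 : 0 < s) (hs1 : s < 1) :
    ∫ t in Ioo (0:ℝ) 1, (t - s) ^ (-(1/2):ℝ) = 2 * Real.sqrt (1 - s) := by
  rw [← integral_Ioc_eq_integral_Ioo, ← intervalIntegral.integral_of_le zero_le_one]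
  rw [intervalIntegral.integral_comp_sub_right (fun u => u ^ (-(1/2):ℝ)) s]
  rw [integral_rpow (Or.inl (by norm_num))]
  have h1 : (0 - s : ℝ) ^ (-(1/2) + 1 : ℝ) = 0 := by
    rw [show (-(1/2) + 1 : ℝ) = 1/2 by norm_num, aux_prpow_sqrt]
    exact Real.sqrt_eq_zero'.mpr (by linarith)
  rw [h1, show (-(1/2) + 1 : ℝ) = 1/2 by norm_num, aux_prpow_sqrt]
  ring

lemma aux_I3 : ∫ t in Ioo (0:ℝ) 1, t ^ (-(1/2):ℝ) = 2 := by
  rw [← integral_Ioc_eq_integral_Ioo, ← intervalIntegral.integral_of_le zero_le_one]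
  rw [integral_rpow (Or.inl (by norm_num))]
  rw [show (-(1/2) + 1 : ℝ) = 1/2 by norm_num, aux_prpow_sqrt, aux_prpow_sqrt]
  simp


lemma aux_ae_ne (s : ℝ) : ∀ᵐ (t : ℝ) ∂(volume.restrict (Ioo (0:ℝ) 1)), t ≠ s := by
  apply ae_restrict_of_ae
  rw [MeasureTheory.ae_iff]
  simp only [not_not, Set.setOf_eq_eq_singleton]
  exact measure_singleton s

lemma aux_inv_sqrt_abs {s t : ℝ} (h : t ≠ s) :
    (Real.sqrt |s - t|)⁻¹ = (s-t) ^ (-(1/2):ℝ) + (t-s) ^ (-(1/2):ℝ) := by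
  rcases lt_or_gt_of_ne h with hlt | hgt
  · rw [abs_of_pos (by linarith), aux_nrpow_pos (by linarith : (0:ℝ) < s - t),
      aux_nrpow_nonpos (by linarith : t - s ≤ 0), add_zero]
  · rw [abs_of_neg (by linarith), neg_sub, aux_nrpow_pos (by linarith : (0:ℝ) < t - s),
      aux_nrpow_nonpos (by linarith : s - t ≤ 0), zero_add]

lemma aux_int (φ : ℝ → ℝ) (hφm : Measurable φ) (M : ℝ)
    (hM : ∀ t ∈ Ioo (0:ℝ) 1, |φ t| ≤ M) (s : ℝ) (hs : s ∈ Icc (0:ℝ) 1) :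
    IntegrableOn (fun t => Real.log |s^2 - t^2| * φ t) (Ioo (0:ℝ) 1) volume := by
  have hM0 : 0 ≤ M := le_trans (abs_nonneg _) (hM (1/2) (by norm_num))
  have hbint : IntegrableOn
      (fun t => M * (2*(s-t) ^ (-(1/2):ℝ) + 2*(t-s) ^ (-(1/2):ℝ) + 2*t ^ (-(1/2):ℝ) + 8))
      (Ioo (0:ℝ) 1) volume := by
    apply Integrable.const_mul
    exact ((((aux_ii_sub_left s).const_mul 2).add ((aux_ii_sub_right s).const_mul 2)).add
      (aux_ii_self.const_mul 2)).add (integrableOn_const measure_Ioo_lt_top.ne)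
  apply Integrable.mono' hbint
  · apply Measurable.aestronglyMeasurable
    exact (Real.measurable_log.comp ((measurable_const.sub (measurable_id.pow_const 2)).abs)).mul hφm
  · filter_upwards [aux_ae_ne s, ae_restrict_mem measurableSet_Ioo] with t hne hmem
    obtain ⟨ht0, ht1⟩ := hmem
    obtain ⟨hs0, hs1⟩ := hs
    have habs : 0 < |s - t| := abs_pos.mpr (fun hh => hne (by linarith [sub_eq_zero.mp hh]))
    have hst : 0 < s + t := by linarith
    have h1 : abs (Real.log |s - t|) ≤ 2 * (s-t) ^ (-(1/2):ℝ) + 2 * (t-s) ^ (-(1/2):ℝ) + 2 := by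
      have := aux_abs_log habs
      rw [aux_inv_sqrt_abs hne] at this
      have hle : Real.sqrt |s - t| ≤ 1 := by
        rw [show (1:ℝ) = Real.sqrt 1 by simp]
        apply Real.sqrt_le_sqrt
        rw [abs_sub_le_iff]; constructor <;> linarith
      linarith
    have h2 : abs (Real.log (s + t)) ≤ 2 * t ^ (-(1/2):ℝ) + 4 := by
      have := aux_abs_log hst
      have e1 : (Real.sqrt (s+t))⁻¹ ≤ (Real.sqrt t)⁻¹ := by
        apply inv_anti₀ (Real.sqrt_pos.mpr ht0)
        exact Real.sqrt_le_sqrt (by linarith)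
      have e2 : Real.sqrt (s + t) ≤ 2 := by
        rw [show (2:ℝ) = Real.sqrt 4 by rw [show (4:ℝ) = 2^2 by norm_num, Real.sqrt_sq]; norm_num]
        exact Real.sqrt_le_sqrt (by linarith)
      rw [aux_nrpow_pos ht0]
      linarith
    have h3 : abs (Real.log |s^2 - t^2|) ≤ abs (Real.log |s - t|) + abs (Real.log (s + t)) := by
      rw [aux_split hs0 ht0 hne]; exact abs_add_le _ _
    have h4 : ‖Real.log |s^2 - t^2| * φ t‖ = abs (Real.log |s^2 - t^2|) * |φ t| := abs_mul _ _
    rw [h4]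
    calc abs (Real.log |s^2 - t^2|) * |φ t| ≤ (2*(s-t) ^ (-(1/2):ℝ) + 2*(t-s) ^ (-(1/2):ℝ) + 2*t ^ (-(1/2):ℝ) + 8) * |φ t| := by
          apply mul_le_mul_of_nonneg_right ?_ (abs_nonneg _)
          linarith
      _ ≤ (2*(s-t) ^ (-(1/2):ℝ) + 2*(t-s) ^ (-(1/2):ℝ) + 2*t ^ (-(1/2):ℝ) + 8) * M := by
          apply mul_le_mul_of_nonneg_left (hM t ⟨ht0, ht1⟩)
          have := aux_nrpow_nonneg (s - t)
          have := aux_nrpow_nonneg (t - s)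
          have := aux_nrpow_nonneg t
          linarith
      _ = M * (2*(s-t) ^ (-(1/2):ℝ) + 2*(t-s) ^ (-(1/2):ℝ) + 2*t ^ (-(1/2):ℝ) + 8) := mul_comm _ _

lemma aux_diff (φ : ℝ → ℝ) (hφm : Measurable φ) (M : ℝ)
    (hM : ∀ t ∈ Ioo (0:ℝ) 1, |φ t| ≤ M) {s : ℝ} (hs : s ∈ Ioo (0:ℝ) 1) :
    |(∫ t in Ioo (0:ℝ) 1, Real.log |s^2 - t^2| * φ t)
      - ∫ t in Ioo (0:ℝ) 1, Real.log (t^2) * φ t| ≤ 32 * M * Real.sqrt (Real.sqrt s) := by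
  obtain ⟨hs0, hs1⟩ := hs
  have hM0 : 0 ≤ M := le_trans (abs_nonneg _) (hM (1/2) (by norm_num))
  have h1 : IntegrableOn (fun t => Real.log |s^2 - t^2| * φ t) (Ioo (0:ℝ) 1) volume :=
    aux_int φ hφm M hM s ⟨hs0.le, hs1.le⟩
  have h0 : IntegrableOn (fun t => Real.log (t^2) * φ t) (Ioo (0:ℝ) 1) volume := by
    have := aux_int φ hφm M hM 0 ⟨le_refl _, zero_le_one⟩
    have he : (fun t : ℝ => Real.log |(0:ℝ)^2 - t^2| * φ t) = (fun t : ℝ => Real.log (t^2) * φ t) := by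
      funext t
      rw [show (0:ℝ)^2 - t^2 = -(t^2) by ring, abs_neg, abs_of_nonneg (sq_nonneg t)]
    rwa [he] at this
  rw [← integral_sub h1 h0]
  have key : ‖∫ t in Ioo (0:ℝ) 1,
      (Real.log |s^2 - t^2| * φ t - Real.log (t^2) * φ t)‖
      ≤ ∫ t in Ioo (0:ℝ) 1, M * (2*Real.sqrt s * (s-t) ^ (-(1/2):ℝ)
          + 2*Real.sqrt s * (t-s) ^ (-(1/2):ℝ)
          + (4*Real.sqrt s + 2 * |Real.log s| * Real.sqrt s) * t ^ (-(1/2):ℝ)) := by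
    apply norm_integral_le_of_norm_le
    · apply Integrable.const_mul
      exact (((aux_ii_sub_left s).const_mul _).add ((aux_ii_sub_right s).const_mul _)).add
        (aux_ii_self.const_mul _)
    · filter_upwards [aux_ae_ne s, ae_restrict_mem measurableSet_Ioo] with t hne hmem
      have e1 : Real.log |s^2 - t^2| * φ t - Real.log (t^2) * φ t
          = (Real.log |s^2 - t^2| - Real.log (t^2)) * φ t := by ring
      rw [e1]
      rw [show ‖(Real.log |s^2 - t^2| - Real.log (t^2)) * φ t‖
        = |Real.log |s^2 - t^2| - Real.log (t^2)| * |φ t| from abs_mul _ _]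
      have hb := aux_key ⟨hs0, hs1⟩ hmem hne
      calc |Real.log |s^2 - t^2| - Real.log (t^2)| * |φ t|
          ≤ (2*Real.sqrt s * (s-t) ^ (-(1/2):ℝ) + 2*Real.sqrt s * (t-s) ^ (-(1/2):ℝ)
            + (4*Real.sqrt s + 2 * |Real.log s| * Real.sqrt s) * t ^ (-(1/2):ℝ)) * |φ t| :=
            mul_le_mul_of_nonneg_right hb (abs_nonneg _)
        _ ≤ (2*Real.sqrt s * (s-t) ^ (-(1/2):ℝ) + 2*Real.sqrt s * (t-s) ^ (-(1/2):ℝ)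
            + (4*Real.sqrt s + 2 * |Real.log s| * Real.sqrt s) * t ^ (-(1/2):ℝ)) * M := by
            apply mul_le_mul_of_nonneg_left (hM t hmem)
            have k1 : 0 ≤ 2*Real.sqrt s * (s-t) ^ (-(1/2):ℝ) :=
              mul_nonneg (by positivity) (aux_nrpow_nonneg _)
            have k2 : 0 ≤ 2*Real.sqrt s * (t-s) ^ (-(1/2):ℝ) :=
              mul_nonneg (by positivity) (aux_nrpow_nonneg _)
            have k3 : 0 ≤ (4*Real.sqrt s + 2 * |Real.log s| * Real.sqrt s) * t ^ (-(1/2):ℝ) :=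
              mul_nonneg (by positivity) (aux_nrpow_nonneg _)
            linarith
        _ = M * (2*Real.sqrt s * (s-t) ^ (-(1/2):ℝ) + 2*Real.sqrt s * (t-s) ^ (-(1/2):ℝ)
            + (4*Real.sqrt s + 2 * |Real.log s| * Real.sqrt s) * t ^ (-(1/2):ℝ)) := mul_comm _ _
  have hval : (∫ t in Ioo (0:ℝ) 1, M * (2*Real.sqrt s * (s-t) ^ (-(1/2):ℝ)
          + 2*Real.sqrt s * (t-s) ^ (-(1/2):ℝ)
          + (4*Real.sqrt s + 2 * |Real.log s| * Real.sqrt s) * t ^ (-(1/2):ℝ)))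
      = M * (2*Real.sqrt s * (2*Real.sqrt s) + 2*Real.sqrt s * (2*Real.sqrt (1-s))
          + (4*Real.sqrt s + 2 * |Real.log s| * Real.sqrt s) * 2) := by
    rw [integral_const_mul]
    congr 1
    have e1 : ∫ t in Ioo (0:ℝ) 1, (2*Real.sqrt s * (s-t) ^ (-(1/2):ℝ)
          + 2*Real.sqrt s * (t-s) ^ (-(1/2):ℝ)
          + (4*Real.sqrt s + 2 * |Real.log s| * Real.sqrt s) * t ^ (-(1/2):ℝ))
        = (∫ t in Ioo (0:ℝ) 1, (2*Real.sqrt s * (s-t) ^ (-(1/2):ℝ)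
            + 2*Real.sqrt s * (t-s) ^ (-(1/2):ℝ)))
          + ∫ t in Ioo (0:ℝ) 1, (4*Real.sqrt s + 2 * |Real.log s| * Real.sqrt s) * t ^ (-(1/2):ℝ) :=
      integral_add (((aux_ii_sub_left s).const_mul (2*Real.sqrt s)).add
        ((aux_ii_sub_right s).const_mul (2*Real.sqrt s)))
        (aux_ii_self.const_mul (4*Real.sqrt s + 2 * |Real.log s| * Real.sqrt s))
    have e2 : ∫ t in Ioo (0:ℝ) 1, (2*Real.sqrt s * (s-t) ^ (-(1/2):ℝ)
          + 2*Real.sqrt s * (t-s) ^ (-(1/2):ℝ))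
        = (∫ t in Ioo (0:ℝ) 1, 2*Real.sqrt s * (s-t) ^ (-(1/2):ℝ))
          + ∫ t in Ioo (0:ℝ) 1, 2*Real.sqrt s * (t-s) ^ (-(1/2):ℝ) :=
      integral_add ((aux_ii_sub_left s).const_mul (2*Real.sqrt s))
        ((aux_ii_sub_right s).const_mul (2*Real.sqrt s))
    have e3 : ∫ t in Ioo (0:ℝ) 1, 2*Real.sqrt s * (s-t) ^ (-(1/2):ℝ)
        = 2*Real.sqrt s * ∫ t in Ioo (0:ℝ) 1, (s-t) ^ (-(1/2):ℝ) := integral_const_mul _ _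
    have e4 : ∫ t in Ioo (0:ℝ) 1, 2*Real.sqrt s * (t-s) ^ (-(1/2):ℝ)
        = 2*Real.sqrt s * ∫ t in Ioo (0:ℝ) 1, (t-s) ^ (-(1/2):ℝ) := integral_const_mul _ _
    have e5 : ∫ t in Ioo (0:ℝ) 1, (4*Real.sqrt s + 2 * |Real.log s| * Real.sqrt s) * t ^ (-(1/2):ℝ)
        = (4*Real.sqrt s + 2 * |Real.log s| * Real.sqrt s) * ∫ t in Ioo (0:ℝ) 1, t ^ (-(1/2):ℝ) :=
      integral_const_mul _ _
    rw [e1, e2, e3, e4, e5, aux_I1 hs0 hs1, aux_I2 hs0 hs1, aux_I3]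
  have hfin := key.trans_eq hval
  have hnum : M * (2*Real.sqrt s * (2*Real.sqrt s) + 2*Real.sqrt s * (2*Real.sqrt (1-s))
      + (4*Real.sqrt s + 2 * |Real.log s| * Real.sqrt s) * 2) ≤ 32 * M * Real.sqrt (Real.sqrt s) := by
    set u := Real.sqrt (Real.sqrt s) with hu
    have hsq : 0 < Real.sqrt s := Real.sqrt_pos.mpr hs0
    have hu0 : 0 < u := Real.sqrt_pos.mpr hsq
    have hu2 : u ^ 2 = Real.sqrt s := Real.sq_sqrt hsq.le
    have hs_le : Real.sqrt s ≤ 1 := by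
      rw [show (1:ℝ) = Real.sqrt 1 by simp]; exact Real.sqrt_le_sqrt hs1.le
    have hu1 : u ≤ 1 := by
      rw [show (1:ℝ) = Real.sqrt 1 by simp]; exact Real.sqrt_le_sqrt hs_le
    have h_s_le : s ≤ Real.sqrt s := by
      nlinarith [Real.sq_sqrt hs0.le, Real.sqrt_nonneg s]
    have hsu : Real.sqrt s ≤ u := by nlinarith
    have h1s : Real.sqrt (1 - s) ≤ 1 :=
      le_trans (Real.sqrt_le_sqrt (by linarith)) (le_of_eq Real.sqrt_one)
    have hlog : |Real.log s| * Real.sqrt s ≤ 4 * u := by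
      have hls : Real.log s ≤ 0 := Real.log_nonpos hs0.le hs1.le
      have habs : |Real.log s| = -Real.log s := abs_of_nonpos hls
      have e1 : Real.log u = Real.log s / 4 := by
        rw [hu, Real.log_sqrt hsq.le, Real.log_sqrt hs0.le]; ring
      have e2 : Real.log u⁻¹ ≤ u⁻¹ - 1 := Real.log_le_sub_one_of_pos (by positivity)
      rw [Real.log_inv] at e2
      have e3 : -Real.log s ≤ 4 * u⁻¹ := by
        have : Real.log s = 4 * Real.log u := by rw [e1]; ring
        rw [this]; linarith
      have e4 : -Real.log s * Real.sqrt s ≤ 4 * u⁻¹ * u^2 := by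
        rw [hu2]
        apply mul_le_mul e3 (le_refl _) (Real.sqrt_nonneg s) (by positivity)
      rw [habs]
      calc -Real.log s * Real.sqrt s ≤ 4 * u⁻¹ * u^2 := e4
        _ = 4 * u := by field_simp
    have hterm : 2*Real.sqrt s * (2*Real.sqrt s) + 2*Real.sqrt s * (2*Real.sqrt (1-s))
        + (4*Real.sqrt s + 2 * |Real.log s| * Real.sqrt s) * 2 ≤ 32 * u := by
      have k1 : 2*Real.sqrt s * (2*Real.sqrt s) ≤ 4 * u := by nlinarith
      have k2 : 2*Real.sqrt s * (2*Real.sqrt (1-s)) ≤ 4 * u := by nlinarith [Real.sqrt_nonneg (1-s)]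
      have k3 : (4*Real.sqrt s + 2 * |Real.log s| * Real.sqrt s) * 2 ≤ 8 * u + 16 * u := by
        nlinarith [abs_nonneg (Real.log s)]
      linarith
    calc M * (2*Real.sqrt s * (2*Real.sqrt s) + 2*Real.sqrt s * (2*Real.sqrt (1-s))
        + (4*Real.sqrt s + 2 * |Real.log s| * Real.sqrt s) * 2) ≤ M * (32 * u) :=
          mul_le_mul_of_nonneg_left hterm hM0
      _ = 32 * M * u := by ring
  calc |(∫ t in Ioo (0:ℝ) 1, (Real.log |s^2 - t^2| * φ t - Real.log (t^2) * φ t))|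
      ≤ M * (2*Real.sqrt s * (2*Real.sqrt s) + 2*Real.sqrt s * (2*Real.sqrt (1-s))
        + (4*Real.sqrt s + 2 * |Real.log s| * Real.sqrt s) * 2) := hfin
    _ ≤ 32 * M * Real.sqrt (Real.sqrt s) := hnum


lemma aux_cre_zero {x : ℝ} (hx0 : 0 < x) (hx1 : x ≤ 1) (c : ℝ) :
    ((((x : ℂ) - 1) ^ ((1:ℂ)/2) * (x : ℂ) ^ (-((1:ℂ)/2)) * ((c : ℝ) : ℂ)).re) = 0 := by
  rcases eq_or_lt_of_le hx1 with h1 | h1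
  · subst h1
    rw [show ((1:ℝ):ℂ) - 1 = 0 by norm_num, Complex.zero_cpow (by norm_num : ((1:ℂ)/2) ≠ 0)]
    simp
  · have hz : ((x : ℂ) - 1) = (((x - 1 : ℝ)) : ℂ) := by push_cast; ring
    have hneg : (x - 1 : ℝ) < 0 := by linarith
    have hzne : (((x - 1 : ℝ)) : ℂ) ≠ 0 := by
      simp only [ne_eq, Complex.ofReal_eq_zero]; linarith
    set w : ℂ := ((x : ℂ) - 1) ^ ((1:ℂ)/2) with hwdef
    have hw_re : w.re = 0 := by
      rw [hwdef, hz, Complex.cpow_def_of_ne_zero hzne, Complex.exp_re]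
      have him : (Complex.log (((x - 1 : ℝ)) : ℂ) * ((1:ℂ)/2)).im = Real.pi * (1/2) := by
        have harg : (((x - 1 : ℝ)) : ℂ).arg = Real.pi := Complex.arg_ofReal_of_neg hneg
        have harg' : ((x:ℂ) - 1).arg = Real.pi := by rw [hz]; exact harg
        simp [Complex.mul_im, Complex.log_im, harg, harg']
      rw [him, show Real.pi * (1/2) = Real.pi / 2 by ring, Real.cos_pi_div_two, mul_zero]
    have hc : (x : ℂ) ^ (-((1:ℂ)/2)) = (((x ^ (-(1/2):ℝ) : ℝ)) : ℂ) := by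
      rw [Complex.ofReal_cpow hx0.le]
      norm_num
    rw [hc]
    have : (w * (((x ^ (-(1/2):ℝ) : ℝ)) : ℂ) * ((c : ℝ) : ℂ)).re
        = (w.re * (x ^ (-(1/2):ℝ))) * c := by
      simp [Complex.mul_re, Complex.ofReal_im, Complex.ofReal_re]
    rw [this, hw_re, zero_mul, zero_mul]

lemma aux_cre_pos {x : ℝ} (hx : 1 < x) {c : ℝ} (hc : 0 < c) :
    0 < ((((x : ℂ) - 1) ^ ((1:ℂ)/2) * (x : ℂ) ^ (-((1:ℂ)/2)) * ((c : ℝ) : ℂ)).re) := by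
  have hz : ((x : ℂ) - 1) = (((x - 1 : ℝ)) : ℂ) := by push_cast; ring
  have hw : ((x : ℂ) - 1) ^ ((1:ℂ)/2) = (((x - 1) ^ ((1/2):ℝ) : ℝ) : ℂ) := by
    rw [hz, Complex.ofReal_cpow (by linarith : (0:ℝ) ≤ x - 1)]
    norm_num
  have hc2 : (x : ℂ) ^ (-((1:ℂ)/2)) = (((x ^ (-(1/2):ℝ) : ℝ)) : ℂ) := by
    rw [Complex.ofReal_cpow (by linarith : (0:ℝ) ≤ x)]
    norm_num
  rw [hw, hc2, ← Complex.ofReal_mul, ← Complex.ofReal_mul, Complex.ofReal_re]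
  have h1 : 0 < (x - 1) ^ ((1/2):ℝ) := Real.rpow_pos_of_pos (by linarith) _
  have h2 : 0 < x ^ (-(1/2):ℝ) := Real.rpow_pos_of_pos (by linarith) _
  positivity

lemma aux_sq_image : (fun t : ℝ => t^2) '' Ioo 0 1 = Ioo (0:ℝ) 1 := by
  ext y
  constructor
  · rintro ⟨t, ⟨ht0, ht1⟩, rfl⟩
    refine ⟨by positivity, ?_⟩
    show t^2 < 1
    nlinarith
  · rintro ⟨hy0, hy1⟩
    refine ⟨Real.sqrt y, ⟨Real.sqrt_pos.mpr hy0, ?_⟩, Real.sq_sqrt hy0.le⟩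
    calc Real.sqrt y < Real.sqrt 1 := Real.sqrt_lt_sqrt hy0.le hy1
      _ = 1 := Real.sqrt_one

lemma aux_cov (g : ℝ → ℝ) :
    ∫ y in Ioo (0:ℝ) 1, g y = ∫ t in Ioo (0:ℝ) 1, |2*t| • g (t^2) := by
  have hderiv : ∀ t ∈ Ioo (0:ℝ) 1, HasDerivWithinAt (fun t : ℝ => t^2) (2*t) (Ioo (0:ℝ) 1) t := by
    intro t _
    simpa using (hasDerivAt_pow 2 t).hasDerivWithinAt
  have hinj : InjOn (fun t : ℝ => t^2) (Ioo (0:ℝ) 1) := by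
    intro a ha b hb hab
    simp only at hab
    nlinarith [ha.1, hb.1]
  have := MeasureTheory.integral_image_eq_integral_abs_deriv_smul measurableSet_Ioo hderiv hinj g
  rw [aux_sq_image] at this
  exact this


/-- Euler–Lagrange variational conditions. If
`G(x) = 2∫₀¹ log|x-y| ψ̂(y) dy - V(x)` with
`ψ̂(y) = (1/(2π))√((1-y)/y) h(y)` and
`G'(x) = -Re((x-1)₊^{1/2} x₊^{-1/2} h(x))` for all `x > 0` (principal branches,
boundary values from the upper half-plane), then `G` is constant on `[0,1]` and
strictly decreasing on `(1,∞)`; in particular there is `ℓ ∈ ℝ` with `G = ℓ` on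
`[0,1]` and `G < ℓ` on `(1,∞)`. -/
theorem variational_conditions (h V : Polynomial ℝ)
    (hpos : ∀ x : ℝ, 0 ≤ x → 0 < h.eval x)
    (ψ : ℝ → ℝ)
    (hψ : ∀ y, ψ y = (1 / (2 * Real.pi)) * Real.sqrt ((1 - y) / y) * h.eval y)
    (G : ℝ → ℝ)
    (hG : ∀ x, G x = 2 * (∫ y in (0:ℝ)..1, Real.log |x - y| * ψ y) - V.eval x)
    (hG' : ∀ x : ℝ, 0 < x → HasDerivAt G
      (-((((x : ℂ) - 1) ^ ((1:ℂ)/2) * (x : ℂ) ^ (-((1:ℂ)/2)) * ((h.eval x : ℝ) : ℂ)).re)) x) :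
    StrictAntiOn G (Set.Ioi 1) ∧
    ∃ ℓ : ℝ, (∀ x ∈ Set.Icc (0:ℝ) 1, G x = ℓ) ∧ (∀ x : ℝ, 1 < x → G x < ℓ) := by
  -- zero derivative on (0,1]
  have hD0 : ∀ x : ℝ, 0 < x → x ≤ 1 → HasDerivAt G 0 x := by
    intro x hx0 hx1
    have hd := hG' x hx0
    rwa [aux_cre_zero hx0 hx1 (h.eval x), neg_zero] at hd
  -- strictly decreasing on Ioi 1
  have hanti : StrictAntiOn G (Set.Ioi 1) := by
    apply strictAntiOn_of_deriv_neg (convex_Ioi 1)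
    · intro x hx
      exact ((hG' x (lt_trans zero_lt_one hx)).continuousAt).continuousWithinAt
    · intro x hx
      rw [interior_Ioi] at hx
      have hd := hG' x (lt_trans zero_lt_one hx)
      rw [hd.deriv]
      have := aux_cre_pos hx (hpos x (by linarith [mem_Ioi.mp hx]))
      linarith
  -- continuity of G on [a,b] ⊆ (0,∞)
  have hcont : ∀ a b : ℝ, 0 < a → ContinuousOn G (Icc a b) := by
    intro a b ha
    intro t ht
    exact ((hG' t (lt_of_lt_of_le ha ht.1)).continuousAt).continuousWithinAt
  -- G constant on (0,1]
  have hconst : ∀ x : ℝ, 0 < x → x ≤ 1 → G x = G 1 := by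
    intro x hx0 hx1
    rcases eq_or_lt_of_le hx1 with heq | hlt
    · rw [heq]
    · obtain ⟨c, _, hceq⟩ := exists_hasDerivAt_eq_slope G (fun _ => (0:ℝ)) hlt
        (hcont x 1 hx0)
        (fun t ht => hD0 t (lt_trans hx0 ht.1) ht.2.le)
      have hne : (1:ℝ) - x ≠ 0 := by linarith
      field_simp at hceq
      linarith
  -- G x < G 1 for x > 1
  have hlt1 : ∀ x : ℝ, 1 < x → G x < G 1 := by
    intro x hx
    obtain ⟨c, hc, hceq⟩ := exists_hasDerivAt_eq_slope G
      (fun t => -((((t : ℂ) - 1) ^ ((1:ℂ)/2) * (t : ℂ) ^ (-((1:ℂ)/2)) * ((h.eval t : ℝ) : ℂ)).re))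
      hx (hcont 1 x zero_lt_one)
      (fun t ht => hG' t (lt_trans zero_lt_one ht.1))
    have hcpos := aux_cre_pos hc.1 (hpos c (by linarith [hc.1]))
    have hx1 : (0:ℝ) < x - 1 := by linarith
    have : (G x - G 1) / (x - 1) < 0 := by rw [← hceq]; linarith
    have := (div_neg_iff.mp this)
    rcases this with ⟨h1, h2⟩ | ⟨h1, h2⟩
    · linarith
    · linarith
  -- the function φ and its bound
  set φ : ℝ → ℝ := fun t => (1/Real.pi) * Real.sqrt (1 - t^2) * h.eval (t^2) with hφdef
  have hφm : Measurable φ := by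
    apply Measurable.mul
    apply Measurable.mul measurable_const
    · exact (Real.continuous_sqrt.comp (continuous_const.sub (continuous_pow 2))).measurable
    · exact (h.continuous.comp (continuous_pow 2)).measurable
  obtain ⟨C, hC⟩ := (isCompact_Icc : IsCompact (Icc (0:ℝ) 1)).exists_bound_of_continuousOn
    (h.continuous.continuousOn)
  have hC0 : 0 ≤ C := le_trans (norm_nonneg _) (hC 0 (by norm_num))
  set M : ℝ := (1/Real.pi) * C with hMdef
  have hπ := Real.pi_pos
  have hM : ∀ t ∈ Ioo (0:ℝ) 1, |φ t| ≤ M := by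
    intro t ⟨ht0, ht1⟩
    have h1 : Real.sqrt (1 - t^2) ≤ 1 :=
      le_trans (Real.sqrt_le_sqrt (by nlinarith)) (le_of_eq Real.sqrt_one)
    have h2 : |h.eval (t^2)| ≤ C := by
      have := hC (t^2) ⟨by positivity, by nlinarith⟩
      rwa [Real.norm_eq_abs] at this
    rw [hφdef]
    simp only
    rw [abs_mul, abs_mul, abs_of_pos (by positivity : (0:ℝ) < 1/Real.pi),
      abs_of_nonneg (Real.sqrt_nonneg _)]
    calc 1/Real.pi * Real.sqrt (1 - t^2) * |h.eval (t^2)|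
        ≤ 1/Real.pi * 1 * C := by
          apply mul_le_mul ?_ h2 (abs_nonneg _) (by positivity)
          apply mul_le_mul_of_nonneg_left h1 (by positivity)
      _ = M := by rw [hMdef]; ring
  -- F and its substitution form
  set F : ℝ → ℝ := fun x => ∫ y in Ioo (0:ℝ) 1, Real.log |x - y| * ψ y with hFdef
  have hGF : ∀ x, G x = 2 * F x - V.eval x := by
    intro x
    rw [hG x, hFdef]
    simp only
    rw [intervalIntegral.integral_of_le zero_le_one, integral_Ioc_eq_integral_Ioo]
  have hcov : ∀ x, F x = ∫ t in Ioo (0:ℝ) 1, Real.log |x - t^2| * φ t := by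
    intro x
    rw [hFdef]
    simp only
    rw [aux_cov (fun y => Real.log |x - y| * ψ y)]
    apply setIntegral_congr_fun measurableSet_Ioo
    intro t ⟨ht0, ht1⟩
    simp only [smul_eq_mul]
    rw [hψ (t^2)]
    have h1 : Real.sqrt ((1 - t^2)/t^2) = Real.sqrt (1 - t^2) / t := by
      rw [Real.sqrt_div (by nlinarith : (0:ℝ) ≤ 1 - t^2), Real.sqrt_sq ht0.le]
    rw [h1, abs_of_pos (by linarith : (0:ℝ) < 2*t), hφdef]
    simp only
    field_simp
  -- the key limit : G 0 = G 1
  have hkey : G 0 = G 1 := by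
    have hdiffF : ∀ s ∈ Ioo (0:ℝ) 1, |F (s^2) - F 0| ≤ 32 * M * Real.sqrt (Real.sqrt s) := by
      intro s hs
      have hd := aux_diff φ hφm M hM hs
      have e0 : F 0 = ∫ t in Ioo (0:ℝ) 1, Real.log (t^2) * φ t := by
        rw [hcov 0]
        apply setIntegral_congr_fun measurableSet_Ioo
        intro t _
        simp only
        rw [show (0:ℝ) - t^2 = -(t^2) by ring, abs_neg, abs_of_nonneg (sq_nonneg t)]
      rw [hcov (s^2), e0]
      have e1 : ∀ t : ℝ, |s^2 - t^2| = |(s:ℝ)^2 - t^2| := fun t => rfl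
      exact hd
    have hFt : Tendsto (fun s => F (s^2)) (𝓝[>] (0:ℝ)) (𝓝 (F 0)) := by
      have h1 : Tendsto (fun s : ℝ => F (s^2) - F 0) (𝓝[>] (0:ℝ)) (𝓝 0) := by
        have h2 : Tendsto (fun s : ℝ => Real.sqrt (Real.sqrt s)) (𝓝 (0:ℝ)) (𝓝 0) := by
          have := (Real.continuous_sqrt.comp Real.continuous_sqrt).tendsto 0
          simpa [Function.comp_def] using this
        have h3 : Tendsto (fun s : ℝ => 32 * M * Real.sqrt (Real.sqrt s)) (𝓝 (0:ℝ)) (𝓝 0) := by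
          have := h2.const_mul (32 * M)
          simpa using this
        refine squeeze_zero_norm' ?_ (h3.mono_left nhdsWithin_le_nhds)
        filter_upwards [Ioo_mem_nhdsGT zero_lt_one] with s hs
        rw [Real.norm_eq_abs]
        exact hdiffF s hs
      have h4 := h1.add_const (F 0)
      simp only [sub_add_cancel, zero_add] at h4
      exact h4
    have hGt : Tendsto (fun s => G (s^2)) (𝓝[>] (0:ℝ)) (𝓝 (G 0)) := by
      have hV : Tendsto (fun s : ℝ => V.eval (s^2)) (𝓝[>] (0:ℝ)) (𝓝 (V.eval 0)) := by
        have : Tendsto (fun s : ℝ => V.eval (s^2)) (𝓝 (0:ℝ)) (𝓝 (V.eval (0^2))) :=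
          (V.continuous.comp (continuous_pow 2)).tendsto 0
        simpa using this.mono_left nhdsWithin_le_nhds
      have := ((hFt.const_mul 2).sub hV)
      have e : G 0 = 2 * F 0 - V.eval 0 := hGF 0
      rw [← e] at this
      apply this.congr
      intro s
      rw [hGF (s^2)]
    have hGconst : Tendsto (fun s => G (s^2)) (𝓝[>] (0:ℝ)) (𝓝 (G 1)) := by
      apply Tendsto.congr' ?_ tendsto_const_nhds
      filter_upwards [Ioo_mem_nhdsGT zero_lt_one] with s hs
      exact (hconst (s^2) (pow_pos hs.1 2) (by nlinarith [hs.1, hs.2])).symm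
    exact tendsto_nhds_unique hGt hGconst
  refine ⟨hanti, G 1, ?_, ?_⟩
  · intro x hx
    rcases eq_or_lt_of_le hx.1 with heq | hlt
    · rw [← heq]; exact hkey
    · exact hconst x hlt hx.2
  · intro x hx
    exact hlt1 x hx
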